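/- In the cooperative model, for all p ∈ [0,1], naturals x, y, k, and nonzero naturals N, T: P^{(x,y)}_{p,q}(Z_T ≥ kN) ≥ γ^{*a}([k, ∞)), where a = min(⌊x/N⌋, ⌊y/N⌋) and γ is the law of ⌊Z_T/N⌋ under P^{(N,N)}_{p,q}. -/

import Mathlib

open MeasureTheory ProbabilityTheory Filter
open scoped ENNReal

/-- Convolution of two measures on `ℕ`. -/
noncomputable def mconv (μ ν : Measure ℕ) : Measure ℕ :=
  Measure.map (fun p : ℕ × ℕ => p.1 + p.2) (μ.prod ν)

/-- `i`-fold convolution power of a measure on `ℕ`. -/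
noncomputable def convPow (ν : Measure ℕ) : ℕ → Measure ℕ
  | 0 => Measure.dirac 0
  | n + 1 => mconv (convPow ν n) ν

/-- The Bernoulli measure with parameter `r` on `ℕ`. -/
noncomputable def bern (r : ℝ) : Measure ℕ :=
  ENNReal.ofReal (1 - r) • Measure.dirac 0 + ENNReal.ofReal r • Measure.dirac 1

/-- The binomial distribution `Bin(n, r)` as a measure on `ℕ`. -/
noncomputable def binomM (n : ℕ) (r : ℝ) : Measure ℕ := convPow (bern r) n

/-- Transition measure of the cooperative model from state `(x, y)`:
`Ber(2,q)^{*(x+y)} ⊗ Ber(2,p)^{*min(x,y)}`. -/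
noncomputable def coopStep (p q : ℝ) (x y : ℕ) : Measure (ℕ × ℕ) :=
  (binomM (2 * (x + y)) q).prod (binomM (2 * min x y) p)

/-- `(XY n)` is the cooperative two-type Markov chain with parameters `p, q`
started from `(x, y)`, characterized by its finite-dimensional distributions. -/
def IsCoop {Ω : Type*} [MeasurableSpace Ω] (P : Measure Ω)
    (XY : ℕ → Ω → ℕ × ℕ) (p q : ℝ) (x y : ℕ) : Prop :=
  ∀ n : ℕ, ∀ a : ℕ → ℕ × ℕ,
    P {ω | ∀ k ≤ n, XY k ω = a k} =
      (if a 0 = (x, y) then 1 else 0) *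
        ∏ k ∈ Finset.range n, coopStep p q (a k).1 (a k).2 {a (k + 1)}

namespace CoopProof

open Set MeasureTheory Measure

section General

variable {α β γ δ : Type*}
variable [MeasurableSpace α] [MeasurableSpace β] [MeasurableSpace γ] [MeasurableSpace δ]

lemma mAll [Countable α] [MeasurableSingletonClass α] (s : Set α) : MeasurableSet s :=
  s.to_countable.measurableSet

lemma mFun [Countable α] [MeasurableSingletonClass α] (f : α → β) : Measurable f :=
  measurable_of_countable f

lemma prod_singleton (μ : Measure α) (ν : Measure β) [SFinite μ] [SFinite ν] (a : α) (b : β) :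
    μ.prod ν {(a, b)} = μ {a} * ν {b} := by
  rw [← Set.singleton_prod_singleton, Measure.prod_prod]

lemma bind_singleton [Countable α] [MeasurableSingletonClass α]
    [Countable β] [MeasurableSingletonClass β]
    (μ : Measure α) (K : α → Measure β) (b : β) :
    μ.bind K {b} = ∑' a, K a {b} * μ {a} := by
  rw [Measure.bind_apply (mAll _) (mFun K).aemeasurable, lintegral_countable']

lemma isProb_map [Countable α] [MeasurableSingletonClass α]
    (μ : Measure α) [IsProbabilityMeasure μ] (f : α → β) :
    IsProbabilityMeasure (μ.map f) :=
  isProbabilityMeasure_map (mFun f).aemeasurable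

lemma isProb_bind [Countable α] [MeasurableSingletonClass α]
    (μ : Measure α) [IsProbabilityMeasure μ] (K : α → Measure β)
    (hK : ∀ a, IsProbabilityMeasure (K a)) :
    IsProbabilityMeasure (μ.bind K) := by
  constructor
  rw [Measure.bind_apply MeasurableSet.univ (mFun K).aemeasurable]
  simp only [measure_univ]
  simp

/-- map commutes with bind for countable discrete source of the kernel. -/
lemma map_bind [Countable α] [MeasurableSingletonClass α]
    (μ : Measure α) (K : α → Measure β) (f : β → γ) (hf : Measurable f) :
    (μ.bind K).map f = μ.bind (fun a => (K a).map f) := by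
  ext s hs
  rw [Measure.map_apply hf hs, Measure.bind_apply (hf hs) (mFun K).aemeasurable,
    Measure.bind_apply hs (mFun _).aemeasurable]
  refine lintegral_congr fun a => ?_
  rw [Measure.map_apply hf hs]

lemma bind_map [Countable β] [MeasurableSingletonClass β]
    (μ : Measure α) (g : α → β) (hg : Measurable g) (K : β → Measure γ) :
    (μ.map g).bind K = μ.bind (fun a => K (g a)) := by
  ext s hs
  rw [Measure.bind_apply hs (mFun K).aemeasurable, Measure.bind_apply (f := fun a => K (g a)) hs ((mFun K).comp hg).aemeasurable,
    lintegral_map (mFun fun b => K b s) hg]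


/-- Product of binds is bind of products, on countable discrete spaces. -/
lemma prod_bind [Countable α] [MeasurableSingletonClass α]
    [Countable β] [MeasurableSingletonClass β]
    [Countable γ] [MeasurableSingletonClass γ]
    [Countable δ] [MeasurableSingletonClass δ]
    (μ : Measure α) (ν : Measure β) [IsProbabilityMeasure μ] [IsProbabilityMeasure ν]
    (K₁ : α → Measure γ) (K₂ : β → Measure δ)
    (h₁ : ∀ a, IsProbabilityMeasure (K₁ a)) (h₂ : ∀ b, IsProbabilityMeasure (K₂ b)) :
    (μ.bind K₁).prod (ν.bind K₂) =
      (μ.prod ν).bind (fun z => (K₁ z.1).prod (K₂ z.2)) := by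
  haveI := isProb_bind μ K₁ h₁
  haveI := isProb_bind ν K₂ h₂
  refine ext_of_singleton fun c => ?_
  obtain ⟨c₁, c₂⟩ := c
  have hz : ∀ z : α × β, ((K₁ z.1).prod (K₂ z.2)) {(c₁, c₂)} = K₁ z.1 {c₁} * K₂ z.2 {c₂} := by
    intro z
    haveI := h₁ z.1; haveI := h₂ z.2
    exact prod_singleton _ _ _ _
  rw [prod_singleton, bind_singleton, bind_singleton, bind_singleton]
  simp only [hz]
  have : ∀ z : α × β, (μ.prod ν) {z} = μ {z.1} * ν {z.2} := fun z => prod_singleton _ _ _ _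
  simp only [this]
  rw [ENNReal.tsum_prod' (f := fun z : α × β => K₁ z.1 {c₁} * K₂ z.2 {c₂} * (μ {z.1} * ν {z.2}))]
  have h3 : ∀ a : α, ∑' b : β, K₁ a {c₁} * K₂ b {c₂} * (μ {a} * ν {b})
      = (K₁ a {c₁} * μ {a}) * ∑' b : β, K₂ b {c₂} * ν {b} := by
    intro a
    rw [← ENNReal.tsum_mul_left]
    exact tsum_congr fun b => by ring
  simp only [h3]
  rw [ENNReal.tsum_mul_right]

end General

section Dom

variable {α β γ δ : Type*}
variable [MeasurableSpace α] [MeasurableSpace β] [MeasurableSpace γ] [MeasurableSpace δ]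

/-- Stochastic domination along a relation, witnessed by a coupling. -/
def DomR (R : α → β → Prop) (μ : Measure α) (ν : Measure β) : Prop :=
  ∃ ρ : Measure (α × β), ρ.map Prod.fst = μ ∧ ρ.map Prod.snd = ν ∧ ρ {z | ¬ R z.1 z.2} = 0

variable [Countable α] [MeasurableSingletonClass α] [Countable β] [MeasurableSingletonClass β]

lemma DomR.apply_le {R : α → β → Prop} {μ : Measure α} {ν : Measure β} (h : DomR R μ ν)
    {sA : Set α} {sB : Set β} (hAB : ∀ a b, R a b → a ∈ sA → b ∈ sB) :
    μ sA ≤ ν sB := by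
  obtain ⟨ρ, h1, h2, h0⟩ := h
  have hμ : μ sA = ρ (Prod.fst ⁻¹' sA) := by rw [← h1, Measure.map_apply (mFun _) (mAll _)]
  have hν : ν sB = ρ (Prod.snd ⁻¹' sB) := by rw [← h2, Measure.map_apply (mFun _) (mAll _)]
  rw [hμ, hν]
  calc ρ (Prod.fst ⁻¹' sA)
      ≤ ρ ((Prod.fst ⁻¹' sA ∩ {z | R z.1 z.2}) ∪ {z | ¬ R z.1 z.2}) := by
        refine measure_mono fun z hz => ?_
        by_cases hR : R z.1 z.2
        · exact Or.inl ⟨hz, hR⟩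
        · exact Or.inr hR
    _ ≤ ρ (Prod.fst ⁻¹' sA ∩ {z | R z.1 z.2}) + ρ {z | ¬ R z.1 z.2} := measure_union_le _ _
    _ = ρ (Prod.fst ⁻¹' sA ∩ {z | R z.1 z.2}) := by rw [h0, add_zero]
    _ ≤ ρ (Prod.snd ⁻¹' sB) := measure_mono fun z hz => hAB z.1 z.2 hz.2 hz.1

omit [Countable α] [MeasurableSingletonClass α] [Countable β] [MeasurableSingletonClass β] in
lemma DomR.mono_rel {R R' : α → β → Prop} (hRR : ∀ a b, R a b → R' a b)
    {μ : Measure α} {ν : Measure β} (h : DomR R μ ν) : DomR R' μ ν := by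
  obtain ⟨ρ, h1, h2, h0⟩ := h
  exact ⟨ρ, h1, h2, measure_mono_null (fun z hz hR => hz (hRR _ _ hR)) h0⟩

lemma isProb_of_map_fst {μ : Measure (α × β)} {m : Measure α} [IsProbabilityMeasure m]
    (h : μ.map Prod.fst = m) : IsProbabilityMeasure μ := by
  constructor
  have h2 : μ.map Prod.fst Set.univ = 1 := by rw [h]; exact measure_univ
  rwa [Measure.map_apply (mFun _) MeasurableSet.univ, Set.preimage_univ] at h2

lemma DomR.map_left {α₀ : Type*} [MeasurableSpace α₀] [Countable α₀]
    [MeasurableSingletonClass α₀]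
    {R : α → β → Prop} {μ₀ : Measure α₀} {ν : Measure β} (e : α₀ → α)
    (h : DomR (fun a₀ b => R (e a₀) b) μ₀ ν) : DomR R (μ₀.map e) ν := by
  obtain ⟨ρ, h1, h2, h0⟩ := h
  refine ⟨ρ.map (Prod.map e id), ?_, ?_, ?_⟩
  · rw [Measure.map_map (mFun _) (mFun _), ← h1, Measure.map_map (mFun _) (mFun _)]
    rfl
  · rw [Measure.map_map (mFun _) (mFun _), ← h2]
    rfl
  · rw [Measure.map_apply (mFun _) (mAll _)]
    exact measure_mono_null (fun z hz => hz) h0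

lemma DomR.prod [Countable γ] [MeasurableSingletonClass γ]
    [Countable δ] [MeasurableSingletonClass δ]
    {R₁ : α → β → Prop} {R₂ : γ → δ → Prop}
    {μ₁ : Measure α} {ν₁ : Measure β} {μ₂ : Measure γ} {ν₂ : Measure δ}
    [IsProbabilityMeasure μ₁] [IsProbabilityMeasure ν₁]
    [IsProbabilityMeasure μ₂] [IsProbabilityMeasure ν₂]
    (h₁ : DomR R₁ μ₁ ν₁) (h₂ : DomR R₂ μ₂ ν₂) :
    DomR (fun u v => R₁ u.1 v.1 ∧ R₂ u.2 v.2) (μ₁.prod μ₂) (ν₁.prod ν₂) := by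
  obtain ⟨ρ₁, a1, a2, a0⟩ := h₁
  obtain ⟨ρ₂, b1, b2, b0⟩ := h₂
  haveI := isProb_of_map_fst a1
  haveI := isProb_of_map_fst b1
  refine ⟨(ρ₁.prod ρ₂).map (fun z => ((z.1.1, z.2.1), (z.1.2, z.2.2))), ?_, ?_, ?_⟩
  · rw [Measure.map_map (mFun _) (mFun _)]
    have he : (Prod.fst ∘ fun z : (α × β) × γ × δ => ((z.1.1, z.2.1), (z.1.2, z.2.2)))
        = Prod.map (Prod.fst : α × β → α) (Prod.fst : γ × δ → γ) := rfl
    rw [he, ← Measure.map_prod_map _ _ (mFun _) (mFun _), a1, b1]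
  · rw [Measure.map_map (mFun _) (mFun _)]
    have he : (Prod.snd ∘ fun z : (α × β) × γ × δ => ((z.1.1, z.2.1), (z.1.2, z.2.2)))
        = Prod.map (Prod.snd : α × β → β) (Prod.snd : γ × δ → δ) := rfl
    rw [he, ← Measure.map_prod_map _ _ (mFun _) (mFun _), a2, b2]
  · rw [Measure.map_apply (mFun _) (mAll _)]
    refine measure_mono_null (t := ({z : α × β | ¬ R₁ z.1 z.2} ×ˢ Set.univ) ∪
      (Set.univ ×ˢ {z : γ × δ | ¬ R₂ z.1 z.2})) ?_ ?_
    · intro z hz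
      simp only [Set.mem_preimage, Set.mem_setOf_eq] at hz
      by_cases hR : R₁ z.1.1 z.1.2
      · exact Or.inr ⟨Set.mem_univ _, fun hR2 => hz ⟨hR, hR2⟩⟩
      · exact Or.inl ⟨hR, Set.mem_univ _⟩
    · refine le_antisymm ?_ (zero_le ..)
      calc (ρ₁.prod ρ₂) (({z : α × β | ¬ R₁ z.1 z.2} ×ˢ Set.univ) ∪
            (Set.univ ×ˢ {z : γ × δ | ¬ R₂ z.1 z.2}))
          ≤ (ρ₁.prod ρ₂) ({z : α × β | ¬ R₁ z.1 z.2} ×ˢ Set.univ)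
            + (ρ₁.prod ρ₂) (Set.univ ×ˢ {z : γ × δ | ¬ R₂ z.1 z.2}) := measure_union_le _ _
        _ = 0 := by rw [Measure.prod_prod, Measure.prod_prod, a0, b0]; simp

lemma DomR.bind {α' β' : Type*} [MeasurableSpace α'] [MeasurableSpace β']
    [Countable α'] [MeasurableSingletonClass α'] [Countable β'] [MeasurableSingletonClass β']
    {R : α → β → Prop} {R' : α' → β' → Prop} {μ : Measure α} {ν : Measure β}
    (h : DomR R μ ν)
    {K₁ : α → Measure α'} {K₂ : β → Measure β'}
    (hp₁ : ∀ a, IsProbabilityMeasure (K₁ a)) (hp₂ : ∀ b, IsProbabilityMeasure (K₂ b))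
    (hK : ∀ a b, R a b → DomR R' (K₁ a) (K₂ b)) :
    DomR R' (μ.bind K₁) (ν.bind K₂) := by
  classical
  obtain ⟨ρ, h1, h2, h0⟩ := h
  set L : α × β → Measure (α' × β') := fun z =>
    if hz : R z.1 z.2 then (hK z.1 z.2 hz).choose else (K₁ z.1).prod (K₂ z.2) with hL
  have Lfst : ∀ z, (L z).map Prod.fst = K₁ z.1 := by
    intro z
    by_cases hz : R z.1 z.2
    · simp only [hL, dif_pos hz]; exact (hK z.1 z.2 hz).choose_spec.1
    · simp only [hL, dif_neg hz]
      haveI := hp₁ z.1; haveI := hp₂ z.2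
      rw [Measure.map_fst_prod, measure_univ, one_smul]
  have Lsnd : ∀ z, (L z).map Prod.snd = K₂ z.2 := by
    intro z
    by_cases hz : R z.1 z.2
    · simp only [hL, dif_pos hz]; exact (hK z.1 z.2 hz).choose_spec.2.1
    · simp only [hL, dif_neg hz]
      haveI := hp₁ z.1; haveI := hp₂ z.2
      rw [Measure.map_snd_prod, measure_univ, one_smul]
  refine ⟨ρ.bind L, ?_, ?_, ?_⟩
  · rw [map_bind _ _ _ (mFun _)]
    simp only [Lfst]
    rw [show (fun z : α × β => K₁ z.1) = fun z : α × β => K₁ (Prod.fst z) from rfl,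
      ← bind_map ρ Prod.fst (mFun _) K₁, h1]
  · rw [map_bind _ _ _ (mFun _)]
    simp only [Lsnd]
    rw [show (fun z : α × β => K₂ z.2) = fun z : α × β => K₂ (Prod.snd z) from rfl,
      ← bind_map ρ Prod.snd (mFun _) K₂, h2]
  · rw [Measure.bind_apply (mAll _) (mFun L).aemeasurable]
    have hae : ∀ᵐ z ∂ρ, R z.1 z.2 := by
      rw [ae_iff]
      exact h0
    have hz : ∀ᵐ z ∂ρ, L z {w : α' × β' | ¬ R' w.1 w.2} = 0 := by
      filter_upwards [hae] with z hz
      simp only [hL, dif_pos hz]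
      exact (hK z.1 z.2 hz).choose_spec.2.2
    rw [lintegral_congr_ae hz]
    simp

end Dom

section Conv

lemma isProb_bern {r : ℝ} (h0 : 0 ≤ r) (h1 : r ≤ 1) : IsProbabilityMeasure (bern r) := by
  constructor
  simp only [bern, Measure.add_apply, Measure.smul_apply, measure_univ, smul_eq_mul, mul_one]
  rw [← ENNReal.ofReal_add (by linarith) h0]
  norm_num

lemma isProb_mconv (μ ν : Measure ℕ) [IsProbabilityMeasure μ] [IsProbabilityMeasure ν] :
    IsProbabilityMeasure (_root_.mconv μ ν) := by
  unfold _root_.mconv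
  exact isProb_map _ _

lemma isProb_convPow (ν : Measure ℕ) [IsProbabilityMeasure ν] (n : ℕ) :
    IsProbabilityMeasure (convPow ν n) := by
  induction n with
  | zero => exact Measure.dirac.isProbabilityMeasure
  | succ n ih =>
    haveI := ih
    show IsProbabilityMeasure (_root_.mconv (convPow ν n) ν)
    exact isProb_mconv _ _

lemma isProb_binomM {r : ℝ} (h0 : 0 ≤ r) (h1 : r ≤ 1) (n : ℕ) :
    IsProbabilityMeasure (binomM n r) := by
  haveI := isProb_bern h0 h1
  exact isProb_convPow _ n

lemma isProb_coopStep {p q : ℝ} (hp0 : 0 ≤ p) (hp1 : p ≤ 1) (hq0 : 0 ≤ q) (hq1 : q ≤ 1)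
    (x y : ℕ) : IsProbabilityMeasure (coopStep p q x y) := by
  haveI := isProb_binomM hq0 hq1 (2 * (x + y))
  haveI := isProb_binomM hp0 hp1 (2 * min x y)
  unfold coopStep
  infer_instance

lemma _root_.mconv_assoc (μ ν κ : Measure ℕ) [IsProbabilityMeasure μ] [IsProbabilityMeasure ν]
    [IsProbabilityMeasure κ] : _root_.mconv (_root_.mconv μ ν) κ = _root_.mconv μ (_root_.mconv ν κ) := by
  haveI := isProb_mconv μ ν
  haveI := isProb_mconv ν κ
  unfold _root_.mconv
  calc Measure.map (fun p : ℕ × ℕ => p.1 + p.2)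
        ((Measure.map (fun p : ℕ × ℕ => p.1 + p.2) (μ.prod ν)).prod κ)
      = Measure.map (fun p : ℕ × ℕ => p.1 + p.2)
        ((Measure.map (fun p : ℕ × ℕ => p.1 + p.2) (μ.prod ν)).prod (Measure.map id κ)) := by
        rw [Measure.map_id]
    _ = Measure.map (fun p : ℕ × ℕ => p.1 + p.2)
        (Measure.map (Prod.map (fun p : ℕ × ℕ => p.1 + p.2) id) ((μ.prod ν).prod κ)) := by
        rw [Measure.map_prod_map _ _ (mFun _) measurable_id]
    _ = Measure.map (fun z : (ℕ × ℕ) × ℕ => z.1.1 + z.1.2 + z.2) ((μ.prod ν).prod κ) := by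
        rw [Measure.map_map (mFun _) (mFun _)]
        rfl
    _ = Measure.map ((fun p : ℕ × ℕ => p.1 + p.2) ∘ (Prod.map id fun p : ℕ × ℕ => p.1 + p.2)
          ∘ ⇑MeasurableEquiv.prodAssoc) ((μ.prod ν).prod κ) := by
        refine congrArg (fun f : (ℕ × ℕ) × ℕ → ℕ => Measure.map f ((μ.prod ν).prod κ)) ?_
        funext z
        show z.1.1 + z.1.2 + z.2 = z.1.1 + (z.1.2 + z.2)
        exact add_assoc _ _ _
    _ = Measure.map (fun p : ℕ × ℕ => p.1 + p.2)
          (Measure.map (Prod.map id fun p : ℕ × ℕ => p.1 + p.2)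
            (Measure.map (⇑MeasurableEquiv.prodAssoc) ((μ.prod ν).prod κ))) := by
        rw [Measure.map_map (mFun _) (mFun _), Measure.map_map (mFun _) (mFun _)]
        rfl
    _ = Measure.map (fun p : ℕ × ℕ => p.1 + p.2)
          ((Measure.map id μ).prod (Measure.map (fun p : ℕ × ℕ => p.1 + p.2) (ν.prod κ))) := by
        rw [Measure.prodAssoc_prod, Measure.map_prod_map _ _ measurable_id (mFun _)]
    _ = Measure.map (fun p : ℕ × ℕ => p.1 + p.2)
          (μ.prod (Measure.map (fun p : ℕ × ℕ => p.1 + p.2) (ν.prod κ))) := by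
        rw [Measure.map_id]

lemma _root_.mconv_dirac_right (μ : Measure ℕ) [IsProbabilityMeasure μ] :
    _root_.mconv μ (Measure.dirac 0) = μ := by
  unfold _root_.mconv
  rw [Measure.prod_dirac, Measure.map_map (mFun _) (mFun _)]
  have : ((fun p : ℕ × ℕ => p.1 + p.2) ∘ fun x : ℕ => (x, 0)) = id := by
    funext x
    simp
  rw [this, Measure.map_id]

lemma convPow_add (ν : Measure ℕ) [IsProbabilityMeasure ν] (a b : ℕ) :
    convPow ν (a + b) = _root_.mconv (convPow ν a) (convPow ν b) := by
  induction b with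
  | zero =>
    haveI := isProb_convPow ν a
    rw [Nat.add_zero]
    exact (_root_.mconv_dirac_right _).symm
  | succ b ih =>
    haveI := isProb_convPow ν a
    haveI := isProb_convPow ν b
    show _root_.mconv (convPow ν (a + b)) ν = _root_.mconv (convPow ν a) (_root_.mconv (convPow ν b) ν)
    rw [ih, _root_.mconv_assoc]

lemma binomM_add {r : ℝ} (h0 : 0 ≤ r) (h1 : r ≤ 1) (m n : ℕ) :
    binomM (m + n) r = _root_.mconv (binomM m r) (binomM n r) := by
  haveI := isProb_bern h0 h1
  exact convPow_add _ m n

/-- coupling of a pair of independent binomials with a larger binomial. -/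
lemma dom2_binom {r : ℝ} (h0 : 0 ≤ r) (h1 : r ≤ 1) {m₁ m₂ m : ℕ} (hm : m₁ + m₂ ≤ m) :
    DomR (fun u (a : ℕ) => u.1 + u.2 ≤ a) ((binomM m₁ r).prod (binomM m₂ r)) (binomM m r) := by
  haveI := isProb_binomM h0 h1 m₁
  haveI := isProb_binomM h0 h1 m₂
  haveI := isProb_binomM h0 h1 (m - (m₁ + m₂))
  refine ⟨(((binomM m₁ r).prod (binomM m₂ r)).prod (binomM (m - (m₁ + m₂)) r)).map
    (fun z : (ℕ × ℕ) × ℕ => (z.1, z.1.1 + z.1.2 + z.2)), ?_, ?_, ?_⟩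
  · rw [Measure.map_map (mFun _) (mFun _)]
    have he : (Prod.fst ∘ fun z : (ℕ × ℕ) × ℕ => (z.1, z.1.1 + z.1.2 + z.2))
        = (Prod.fst : (ℕ × ℕ) × ℕ → ℕ × ℕ) := rfl
    rw [he, Measure.map_fst_prod, measure_univ, one_smul]
  · rw [Measure.map_map (mFun _) (mFun _)]
    have he : (Prod.snd ∘ fun z : (ℕ × ℕ) × ℕ => (z.1, z.1.1 + z.1.2 + z.2))
        = (fun p : ℕ × ℕ => p.1 + p.2) ∘ (Prod.map (fun p : ℕ × ℕ => p.1 + p.2) id) := rfl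
    rw [he, ← Measure.map_map (mFun _) (mFun _),
      ← Measure.map_prod_map _ _ (mFun _) measurable_id, Measure.map_id]
    show _root_.mconv (_root_.mconv (binomM m₁ r) (binomM m₂ r)) (binomM (m - (m₁ + m₂)) r) = binomM m r
    rw [← binomM_add h0 h1, ← binomM_add h0 h1, Nat.add_sub_cancel' hm]
  · rw [Measure.map_apply (mFun _) (mAll _)]
    have he : ((fun z : (ℕ × ℕ) × ℕ => (z.1, z.1.1 + z.1.2 + z.2)) ⁻¹'
        {z : (ℕ × ℕ) × ℕ | ¬ (z.1.1 + z.1.2 ≤ z.2)}) = ∅ := by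
      ext z
      simp [Nat.le_add_right]
    rw [he]
    exact measure_empty

lemma map_comm4 {α β γ δ : Type*}
    [MeasurableSpace α] [MeasurableSpace β] [MeasurableSpace γ] [MeasurableSpace δ]
    [Countable α] [MeasurableSingletonClass α] [Countable β] [MeasurableSingletonClass β]
    [Countable γ] [MeasurableSingletonClass γ] [Countable δ] [MeasurableSingletonClass δ]
    (μ₁ : Measure α) (ν₁ : Measure β) (μ₂ : Measure γ) (ν₂ : Measure δ)
    [IsProbabilityMeasure μ₁] [IsProbabilityMeasure ν₁]
    [IsProbabilityMeasure μ₂] [IsProbabilityMeasure ν₂] :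
    ((μ₁.prod ν₁).prod (μ₂.prod ν₂)).map
        (fun z : (α × β) × γ × δ => ((z.1.1, z.2.1), (z.1.2, z.2.2)))
      = (μ₁.prod μ₂).prod (ν₁.prod ν₂) := by
  refine Measure.ext_of_singleton fun c => ?_
  obtain ⟨⟨a, c'⟩, b, d⟩ := c
  rw [Measure.map_apply (mFun _) (mAll _)]
  have he : ((fun z : (α × β) × γ × δ => ((z.1.1, z.2.1), (z.1.2, z.2.2))) ⁻¹'
      {((a, c'), (b, d))}) = {((a, b), (c', d))} := by
    ext z
    simp only [Set.mem_preimage, Set.mem_singleton_iff, Prod.ext_iff]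
    tauto
  rw [he, prod_singleton, prod_singleton, prod_singleton, prod_singleton, prod_singleton,
    prod_singleton]
  ring

end Conv

section Chain

variable (p q : ℝ)

/-- One-step transition kernel. -/
noncomputable def Kc (s : ℕ × ℕ) : Measure (ℕ × ℕ) := coopStep p q s.1 s.2

/-- The law at time `n` of the chain started at `s`. -/
noncomputable def chain : ℕ → (ℕ × ℕ) → Measure (ℕ × ℕ)
  | 0 => fun s => Measure.dirac s
  | n + 1 => fun s => (Kc p q s).bind (chain n)

variable {p q : ℝ}

lemma isProb_Kc (hp0 : 0 ≤ p) (hp1 : p ≤ 1) (hq0 : 0 ≤ q) (hq1 : q ≤ 1) (s : ℕ × ℕ) : IsProbabilityMeasure (Kc p q s) :=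
  isProb_coopStep hp0 hp1 hq0 hq1 s.1 s.2

lemma isProb_chain (hp0 : 0 ≤ p) (hp1 : p ≤ 1) (hq0 : 0 ≤ q) (hq1 : q ≤ 1) (n : ℕ) (s : ℕ × ℕ) : IsProbabilityMeasure (chain p q n s) := by
  induction n generalizing s with
  | zero => exact Measure.dirac.isProbabilityMeasure
  | succ n ih =>
    haveI := isProb_Kc hp0 hp1 hq0 hq1 s
    exact isProb_bind _ _ fun w => ih w

lemma dom_Kc (hp0 : 0 ≤ p) (hp1 : p ≤ 1) (hq0 : 0 ≤ q) (hq1 : q ≤ 1) {s1 s2 s : ℕ × ℕ} (h1 : s1.1 + s2.1 ≤ s.1) (h2 : s1.2 + s2.2 ≤ s.2) :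
    DomR (fun z (w : ℕ × ℕ) => z.1.1 + z.2.1 ≤ w.1 ∧ z.1.2 + z.2.2 ≤ w.2)
      ((Kc p q s1).prod (Kc p q s2)) (Kc p q s) := by
  haveI := isProb_binomM hq0 hq1 (2 * (s1.1 + s1.2))
  haveI := isProb_binomM hq0 hq1 (2 * (s2.1 + s2.2))
  haveI := isProb_binomM hp0 hp1 (2 * min s1.1 s1.2)
  haveI := isProb_binomM hp0 hp1 (2 * min s2.1 s2.2)
  haveI := isProb_binomM hq0 hq1 (2 * (s.1 + s.2))
  haveI := isProb_binomM hp0 hp1 (2 * min s.1 s.2)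
  have hrw : (Kc p q s1).prod (Kc p q s2)
      = (((binomM (2 * (s1.1 + s1.2)) q).prod (binomM (2 * (s2.1 + s2.2)) q)).prod
          ((binomM (2 * min s1.1 s1.2) p).prod (binomM (2 * min s2.1 s2.2) p))).map
          (fun z => ((z.1.1, z.2.1), (z.1.2, z.2.2))) := (map_comm4 _ _ _ _).symm
  rw [hrw]
  refine DomR.map_left _ ?_
  have hq' : 2 * (s1.1 + s1.2) + 2 * (s2.1 + s2.2) ≤ 2 * (s.1 + s.2) := by omega
  have hp' : 2 * min s1.1 s1.2 + 2 * min s2.1 s2.2 ≤ 2 * min s.1 s.2 := by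
    have : min s1.1 s1.2 + min s2.1 s2.2 ≤ min s.1 s.2 :=
      le_min (le_trans (add_le_add (min_le_left _ _) (min_le_left _ _)) h1)
        (le_trans (add_le_add (min_le_right _ _) (min_le_right _ _)) h2)
    omega
  exact DomR.prod (dom2_binom hq0 hq1 hq') (dom2_binom hp0 hp1 hp')

lemma dom_chain (hp0 : 0 ≤ p) (hp1 : p ≤ 1) (hq0 : 0 ≤ q) (hq1 : q ≤ 1) (n : ℕ) : ∀ s1 s2 s : ℕ × ℕ, s1.1 + s2.1 ≤ s.1 → s1.2 + s2.2 ≤ s.2 →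
    DomR (fun z (w : ℕ × ℕ) => z.1.1 + z.2.1 ≤ w.1 ∧ z.1.2 + z.2.2 ≤ w.2)
      ((chain p q n s1).prod (chain p q n s2)) (chain p q n s) := by
  induction n with
  | zero =>
    intro s1 s2 s h1 h2
    refine ⟨Measure.dirac ((s1, s2), s), ?_, ?_, ?_⟩
    · rw [Measure.map_dirac' (mFun _)]
      show Measure.dirac (s1, s2) = (Measure.dirac s1).prod (Measure.dirac s2)
      rw [Measure.dirac_prod_dirac]
    · rw [Measure.map_dirac' (mFun _)]
      rfl
    · rw [Measure.dirac_apply' _ (mAll _)]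
      have : ((s1, s2), s) ∉ {z : ((ℕ × ℕ) × ℕ × ℕ) × ℕ × ℕ | ¬ (z.1.1.1 + z.1.2.1 ≤ z.2.1
          ∧ z.1.1.2 + z.1.2.2 ≤ z.2.2)} := fun hc => hc ⟨h1, h2⟩
      exact Set.indicator_of_notMem this _
  | succ n ih =>
    intro s1 s2 s h1 h2
    haveI := isProb_Kc hp0 hp1 hq0 hq1 s1
    haveI := isProb_Kc hp0 hp1 hq0 hq1 s2
    have hPB : (chain p q (n + 1) s1).prod (chain p q (n + 1) s2)
        = ((Kc p q s1).prod (Kc p q s2)).bind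
            (fun z => (chain p q n z.1).prod (chain p q n z.2)) := by
      show ((Kc p q s1).bind (chain p q n)).prod ((Kc p q s2).bind (chain p q n)) = _
      rw [prod_bind _ _ _ _ (fun w => isProb_chain hp0 hp1 hq0 hq1 n w)
        (fun w => isProb_chain hp0 hp1 hq0 hq1 n w)]
    rw [hPB]
    show DomR _ _ ((Kc p q s).bind (chain p q n))
    refine DomR.bind (dom_Kc hp0 hp1 hq0 hq1 h1 h2) ?_ ?_ ?_
    · intro z
      haveI := isProb_chain hp0 hp1 hq0 hq1 n z.1
      haveI := isProb_chain hp0 hp1 hq0 hq1 n z.2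
      infer_instance
    · exact fun w => isProb_chain hp0 hp1 hq0 hq1 n w
    · exact fun z w hzw => ih z.1 z.2 w hzw.1 hzw.2

end Chain

section PathSum

variable (p q : ℝ)

/-- Extension of a finite path to `ℕ`. -/
def Ext (n : ℕ) (b : Fin (n + 1) → ℕ × ℕ) : ℕ → ℕ × ℕ :=
  fun k => b ⟨min k n, Nat.lt_succ_of_le (min_le_right _ _)⟩

/-- Path weight (product of transition probabilities). -/
noncomputable def Fw (n : ℕ) (a : ℕ → ℕ × ℕ) : ℝ≥0∞ :=
  ∏ k ∈ Finset.range n, Kc p q (a k) {a (k + 1)}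

lemma Ext_le {n : ℕ} (b : Fin (n + 1) → ℕ × ℕ) {k : ℕ} (hk : k ≤ n) :
    Ext n b k = b ⟨k, Nat.lt_succ_of_le hk⟩ := by
  unfold Ext
  congr 1
  exact Fin.ext (by simp [Nat.min_eq_left hk])

lemma Ext_cons_zero (n : ℕ) (c : ℕ × ℕ) (b : Fin (n + 1) → ℕ × ℕ) :
    Ext (n + 1) (Fin.cons c b) 0 = c := by
  rw [Ext_le _ (Nat.zero_le _), Fin.mk_zero, Fin.cons_zero]

lemma Ext_cons_succ (n : ℕ) (c : ℕ × ℕ) (b : Fin (n + 1) → ℕ × ℕ) (k : ℕ) :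
    Ext (n + 1) (Fin.cons c b) (k + 1) = Ext n b k := by
  unfold Ext
  have h1 : (⟨min (k + 1) (n + 1), Nat.lt_succ_of_le (min_le_right _ _)⟩ : Fin (n + 2))
      = Fin.succ ⟨min k n, Nat.lt_succ_of_le (min_le_right _ _)⟩ := by
    apply Fin.ext
    simp [Nat.succ_min_succ]
  rw [h1, Fin.cons_succ]

lemma Fw_cons (n : ℕ) (c : ℕ × ℕ) (b : Fin (n + 1) → ℕ × ℕ) :
    Fw p q (n + 1) (Ext (n + 1) (Fin.cons c b))
      = Fw p q n (Ext n b) * Kc p q c {Ext n b 0} := by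
  unfold Fw
  rw [Finset.prod_range_succ']
  congr 1
  · refine Finset.prod_congr rfl fun k _ => ?_
    rw [Ext_cons_succ, Ext_cons_succ]

lemma path_sum {p q : ℝ} (hp0 : 0 ≤ p) (hp1 : p ≤ 1) (hq0 : 0 ≤ q) (hq1 : q ≤ 1) :
    ∀ (n : ℕ) (h g : ℕ × ℕ → ℝ≥0∞),
    ∑' b : Fin (n + 1) → ℕ × ℕ, h (Ext n b 0) * Fw p q n (Ext n b) * g (Ext n b n)
      = ∑' w : ℕ × ℕ, h w * ∫⁻ c, g c ∂(chain p q n w) := by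
  intro n
  induction n with
  | zero =>
    intro h g
    rw [← Equiv.tsum_eq (Equiv.funUnique (Fin 1) (ℕ × ℕ)).symm]
    refine tsum_congr fun w => ?_
    unfold Fw
    rw [Finset.prod_range_zero, mul_one]
    have hch : chain p q 0 w = Measure.dirac w := rfl
    rw [hch, lintegral_dirac' w (mFun g)]
    rfl
  | succ n ih =>
    intro h g
    rw [← Equiv.tsum_eq (Fin.consEquiv (fun _ : Fin (n + 2) => ℕ × ℕ))]
    rw [ENNReal.tsum_prod']
    have hstep : ∀ c : ℕ × ℕ,
        ∑' b : Fin (n + 1) → ℕ × ℕ,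
          h (Ext (n + 1) (Fin.consEquiv (fun _ : Fin (n + 2) => ℕ × ℕ) (c, b)) 0)
            * Fw p q (n + 1) (Ext (n + 1) (Fin.consEquiv (fun _ : Fin (n + 2) => ℕ × ℕ) (c, b)))
            * g (Ext (n + 1) (Fin.consEquiv (fun _ : Fin (n + 2) => ℕ × ℕ) (c, b)) (n + 1))
        = ∑' w : ℕ × ℕ, (h c * Kc p q c {w}) * ∫⁻ x, g x ∂(chain p q n w) := by
      intro c
      rw [← ih (fun w => h c * Kc p q c {w}) g]
      refine tsum_congr fun b => ?_
      have hc : Fin.consEquiv (fun _ : Fin (n + 2) => ℕ × ℕ) (c, b) = Fin.cons c b := rfl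
      rw [hc, Ext_cons_zero, Fw_cons]
      have hlast : Ext (n + 1) (Fin.cons c b) (n + 1) = Ext n b n := Ext_cons_succ n c b n
      rw [hlast]
      ring
    calc ∑' (c : ℕ × ℕ) (b : Fin (n + 1) → ℕ × ℕ),
          h (Ext (n + 1) (Fin.consEquiv (fun _ : Fin (n + 2) => ℕ × ℕ) (c, b)) 0)
            * Fw p q (n + 1) (Ext (n + 1) (Fin.consEquiv (fun _ : Fin (n + 2) => ℕ × ℕ) (c, b)))
            * g (Ext (n + 1) (Fin.consEquiv (fun _ : Fin (n + 2) => ℕ × ℕ) (c, b)) (n + 1))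
        = ∑' c : ℕ × ℕ, ∑' w : ℕ × ℕ, (h c * Kc p q c {w}) * ∫⁻ x, g x ∂(chain p q n w) := by
          exact tsum_congr hstep
      _ = ∑' c : ℕ × ℕ, h c * ∫⁻ x, g x ∂(chain p q (n + 1) c) := by
          refine tsum_congr fun c => ?_
          show _ = h c * ∫⁻ x, g x ∂((Kc p q c).bind (chain p q n))
          rw [Measure.lintegral_bind (mFun (chain p q n)).aemeasurable (mFun g).aemeasurable, lintegral_countable']
          rw [← ENNReal.tsum_mul_left]
          refine tsum_congr fun w => ?_
          ring

end PathSum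

section Bridge

variable {Ω : Type*} [MeasurableSpace Ω] {p q : ℝ}

lemma cyl_apply (P : Measure Ω) {x y : ℕ} (XY : ℕ → Ω → ℕ × ℕ)
    (hXY : IsCoop P XY p q x y) (T : ℕ) (b : Fin (T + 1) → ℕ × ℕ) :
    P {ω | ∀ k ≤ T, XY k ω = Ext T b k}
      = (if Ext T b 0 = (x, y) then 1 else 0) * Fw p q T (Ext T b) :=
  hXY T (Ext T b)

lemma P_ge_chain (P : Measure Ω) [IsProbabilityMeasure P]
    (hp0 : 0 ≤ p) (hp1 : p ≤ 1) (hq0 : 0 ≤ q) (hq1 : q ≤ 1)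
    {x y : ℕ} (XY : ℕ → Ω → ℕ × ℕ) (hXY : IsCoop P XY p q x y) (T : ℕ)
    (E : Set (ℕ × ℕ)) :
    chain p q T (x, y) E ≤ P {ω | XY T ω ∈ E} := by
  classical
  haveI := isProb_chain hp0 hp1 hq0 hq1 T (x, y)
  set A : Set Ω := {ω | XY T ω ∈ E} with hA
  set D : (Fin (T + 1) → ℕ × ℕ) → Set Ω := fun b =>
    if Ext T b T ∈ Eᶜ then {ω | ∀ k ≤ T, XY k ω = Ext T b k} else ∅ with hD
  have hsub : Aᶜ ⊆ ⋃ b, D b := by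
    intro ω hω
    refine Set.mem_iUnion.2 ⟨fun i => XY i ω, ?_⟩
    have hext : ∀ k, k ≤ T → Ext T (fun i : Fin (T + 1) => XY i ω) k = XY k ω := by
      intro k hk
      rw [Ext_le _ hk]
    rw [hD]
    simp only
    rw [if_pos (by rw [hext T le_rfl]; exact hω)]
    exact fun k hk => (hext k hk).symm
  have hbound : ∀ b, P (D b) ≤ (if Ext T b 0 = (x, y) then 1 else 0) * Fw p q T (Ext T b)
      * (Eᶜ.indicator 1 (Ext T b T)) := by
    intro b
    rw [hD]
    simp only
    by_cases hc : Ext T b T ∈ Eᶜ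
    · rw [if_pos hc, Set.indicator_of_mem hc, Pi.one_apply, mul_one]
      exact le_of_eq (cyl_apply P XY hXY T b)
    · rw [if_neg hc, Set.indicator_of_notMem hc, mul_zero]
      simp
  have hcompl : P Aᶜ ≤ chain p q T (x, y) Eᶜ := by
    calc P Aᶜ ≤ P (⋃ b, D b) := measure_mono hsub
      _ ≤ ∑' b, P (D b) := measure_iUnion_le _
      _ ≤ ∑' b : Fin (T + 1) → ℕ × ℕ, (if Ext T b 0 = (x, y) then 1 else 0)
            * Fw p q T (Ext T b) * (Eᶜ.indicator 1 (Ext T b T)) := ENNReal.tsum_le_tsum hbound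
      _ = ∑' w : ℕ × ℕ, (if w = (x, y) then 1 else 0)
            * ∫⁻ c, Eᶜ.indicator 1 c ∂(chain p q T w) :=
          path_sum hp0 hp1 hq0 hq1 T (fun w => if w = (x, y) then 1 else 0) (Eᶜ.indicator 1)
      _ = ∫⁻ c, Eᶜ.indicator 1 c ∂(chain p q T (x, y)) := by
          rw [tsum_eq_single (x, y) (fun w hw => by rw [if_neg hw, zero_mul])]
          rw [if_pos rfl, one_mul]
      _ = chain p q T (x, y) Eᶜ := lintegral_indicator_one (mAll _)
  have h1 : chain p q T (x, y) E + chain p q T (x, y) Eᶜ = 1 := by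
    rw [measure_add_measure_compl (mAll E), measure_univ]
  have h2 : (1 : ℝ≥0∞) ≤ P A + P Aᶜ := by
    calc (1 : ℝ≥0∞) = P Set.univ := measure_univ.symm
      _ = P (A ∪ Aᶜ) := by rw [Set.union_compl_self]
      _ ≤ P A + P Aᶜ := measure_union_le _ _
  refine ENNReal.le_of_add_le_add_right (measure_ne_top (chain p q T (x, y)) Eᶜ) ?_
  calc chain p q T (x, y) E + chain p q T (x, y) Eᶜ = 1 := h1
    _ ≤ P A + P Aᶜ := h2
    _ ≤ P A + chain p q T (x, y) Eᶜ := add_le_add_right hcompl _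

lemma map_eq_chain (P' : Measure Ω) [IsProbabilityMeasure P']
    (hp0 : 0 ≤ p) (hp1 : p ≤ 1) (hq0 : 0 ≤ q) (hq1 : q ≤ 1)
    {x y : ℕ} (XY' : ℕ → Ω → ℕ × ℕ) (hXY' : IsCoop P' XY' p q x y)
    (hmeas : ∀ n, Measurable (XY' n)) (T : ℕ) :
    P'.map (XY' T) = chain p q T (x, y) := by
  classical
  refine Measure.ext_of_singleton fun c => ?_
  rw [Measure.map_apply (hmeas T) (mAll _)]
  set D : (Fin (T + 1) → ℕ × ℕ) → Set Ω := fun b =>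
    if Ext T b T = c then {ω | ∀ k ≤ T, XY' k ω = Ext T b k} else ∅ with hD
  have hU : XY' T ⁻¹' {c} = ⋃ b, D b := by
    ext ω
    constructor
    · intro hω
      refine Set.mem_iUnion.2 ⟨fun i => XY' i ω, ?_⟩
      have hext : ∀ k, k ≤ T → Ext T (fun i : Fin (T + 1) => XY' i ω) k = XY' k ω := by
        intro k hk
        rw [Ext_le _ hk]
      rw [hD]
      simp only
      rw [if_pos (by rw [hext T le_rfl]; exact hω)]
      exact fun k hk => (hext k hk).symm
    · intro hω
      obtain ⟨b, hb⟩ := Set.mem_iUnion.1 hω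
      rw [hD] at hb
      simp only at hb
      by_cases hc : Ext T b T = c
      · rw [if_pos hc] at hb
        have hT := hb T le_rfl
        simp only [Set.mem_preimage, Set.mem_singleton_iff]
        rw [hT, hc]
      · rw [if_neg hc] at hb
        exact absurd hb (Set.notMem_empty ω)
  have hdisj : Pairwise (Function.onFun Disjoint D) := by
    intro b b' hbb
    refine Set.disjoint_left.2 fun ω hb hb' => ?_
    rw [hD] at hb hb'
    simp only at hb hb'
    split_ifs at hb hb' with hc hc'
    · refine hbb ?_
      funext i
      have hi : (i : ℕ) ≤ T := Nat.lt_succ_iff.1 i.isLt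
      have e1 : Ext T b i = b i := by
        rw [Ext_le _ hi]
      have e2 : Ext T b' i = b' i := by
        rw [Ext_le _ hi]
      have e3 := (hb i hi).symm.trans (hb' i hi)
      rw [e1, e2] at e3
      exact e3
    · exact hb'
    · exact hb
    · exact hb
  have hmeasD : ∀ b, MeasurableSet (D b) := by
    intro b
    rw [hD]
    simp only
    split_ifs
    · have hset : {ω | ∀ k ≤ T, XY' k ω = Ext T b k}
          = ⋂ k, ⋂ (_ : k ≤ T), XY' k ⁻¹' {Ext T b k} := by
        ext ω
        simp [Set.mem_iInter]
      rw [hset]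
      exact MeasurableSet.iInter fun k => MeasurableSet.iInter fun _ => (hmeas k) (mAll _)
    · exact MeasurableSet.empty
  rw [hU, measure_iUnion hdisj hmeasD]
  have hPb : ∀ b, P' (D b) = (if Ext T b 0 = (x, y) then 1 else 0) * Fw p q T (Ext T b)
      * (if Ext T b T = c then 1 else 0) := by
    intro b
    rw [hD]
    simp only
    by_cases hc : Ext T b T = c
    · rw [if_pos hc, if_pos hc, mul_one]
      exact cyl_apply P' XY' hXY' T b
    · rw [if_neg hc, if_neg hc, mul_zero]
      simp
  calc ∑' b, P' (D b)
      = ∑' b : Fin (T + 1) → ℕ × ℕ, (if Ext T b 0 = (x, y) then 1 else 0)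
          * Fw p q T (Ext T b) * (if Ext T b T = c then 1 else 0) := tsum_congr hPb
    _ = ∑' w : ℕ × ℕ, (if w = (x, y) then 1 else 0)
          * ∫⁻ d, (if d = c then (1 : ℝ≥0∞) else 0) ∂(chain p q T w) :=
        path_sum hp0 hp1 hq0 hq1 T (fun w => if w = (x, y) then 1 else 0)
          (fun d => if d = c then 1 else 0)
    _ = ∫⁻ d, (if d = c then (1 : ℝ≥0∞) else 0) ∂(chain p q T (x, y)) := by
        rw [tsum_eq_single (x, y) (fun w hw => by rw [if_neg hw, zero_mul])]
        rw [if_pos rfl, one_mul]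
    _ = chain p q T (x, y) {c} := by
        have hind : (fun d : ℕ × ℕ => if d = c then (1 : ℝ≥0∞) else 0)
            = Set.indicator {c} 1 := by
          funext d
          rw [Set.indicator_apply]
          simp
        rw [hind, lintegral_indicator_one (mAll _)]

end Bridge


section Main

lemma mconv_upper (α γ' : Measure ℕ) [IsProbabilityMeasure α] [IsProbabilityMeasure γ']
    (k : ℕ) :
    _root_.mconv α γ' {j | k ≤ j} = ∑' i : ℕ, α {j | k ≤ j + i} * γ' {i} := by
  show Measure.map (fun p : ℕ × ℕ => p.1 + p.2) (α.prod γ') {j | k ≤ j} = _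
  rw [Measure.map_apply (mFun _) (mAll _)]
  have hU : (fun p : ℕ × ℕ => p.1 + p.2) ⁻¹' {j | k ≤ j}
      = ⋃ i : ℕ, ({j | k ≤ j + i} ×ˢ ({i} : Set ℕ)) := by
    ext z
    simp only [Set.mem_preimage, Set.mem_setOf_eq, Set.mem_iUnion, Set.mem_prod,
      Set.mem_singleton_iff]
    constructor
    · intro hz
      exact ⟨z.2, hz, rfl⟩
    · rintro ⟨i, h1, h2⟩
      rw [h2]
      exact h1
  have hdisj : Pairwise (Function.onFun Disjoint
      (fun i : ℕ => ({j | k ≤ j + i} ×ˢ ({i} : Set ℕ)))) := by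
    intro i j hij
    refine Set.disjoint_left.2 fun z hz hz' => ?_
    exact hij ((Set.mem_singleton_iff.1 hz.2).symm.trans (Set.mem_singleton_iff.1 hz'.2))
  rw [hU, measure_iUnion hdisj (fun i => mAll _)]
  exact tsum_congr fun i => Measure.prod_prod _ _

lemma claim {p q : ℝ} (hp0 : 0 ≤ p) (hp1 : p ≤ 1) (hq0 : 0 ≤ q) (hq1 : q ≤ 1)
    (N T : ℕ) (γ : Measure ℕ)
    (hγc : γ = (chain p q T (N, N)).map (fun w : ℕ × ℕ => min w.1 w.2 / N)) :
    ∀ a x y : ℕ, a * N ≤ x → a * N ≤ y → ∀ k : ℕ,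
      convPow γ a {j | k ≤ j} ≤ chain p q T (x, y) {w : ℕ × ℕ | k * N ≤ min w.1 w.2} := by
  haveI hNN := isProb_chain hp0 hp1 hq0 hq1 T (N, N)
  haveI hγp : IsProbabilityMeasure γ := by
    rw [hγc]
    exact isProb_map _ _
  intro a
  induction a with
  | zero =>
    intro x y hx hy k
    haveI := isProb_chain hp0 hp1 hq0 hq1 T (x, y)
    show Measure.dirac 0 {j | k ≤ j} ≤ _
    rcases Nat.eq_zero_or_pos k with hk | hk
    · subst hk
      have h1 : {w : ℕ × ℕ | 0 * N ≤ min w.1 w.2} = Set.univ := by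
        ext w
        simp
      rw [h1, measure_univ]
      exact prob_le_one
    · have h0 : (0 : ℕ) ∉ {j | k ≤ j} := by
        simp only [Set.mem_setOf_eq]
        omega
      rw [Measure.dirac_apply' _ (mAll _), Set.indicator_of_notMem h0]
      exact zero_le ..
  | succ a ih =>
    intro x y hx hy k
    haveI := isProb_convPow γ a
    have hxs : a * N + N ≤ x := by rw [← Nat.succ_mul]; exact hx
    have hys : a * N + N ≤ y := by rw [← Nat.succ_mul]; exact hy
    have hNx : N ≤ x := le_trans (Nat.le_add_left N (a * N)) hxs
    have hNy : N ≤ y := le_trans (Nat.le_add_left N (a * N)) hys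
    have hdom := dom_chain hp0 hp1 hq0 hq1 T (N, N) (x - N, y - N) (x, y)
      (show N + (x - N) ≤ x by omega) (show N + (y - N) ≤ y by omega)
    set gf : ℕ × ℕ → ℕ := fun w => min w.1 w.2 / N with hgf
    set sA : Set ((ℕ × ℕ) × ℕ × ℕ) := ⋃ i : ℕ,
      ((gf ⁻¹' {i}) ×ˢ {w : ℕ × ℕ | (k - i) * N ≤ min w.1 w.2}) with hsA
    have himp : ∀ z w, (z.1.1 + z.2.1 ≤ w.1 ∧ z.1.2 + z.2.2 ≤ w.2) → z ∈ sA
        → w ∈ {w : ℕ × ℕ | k * N ≤ min w.1 w.2} := by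
      intro z w hzw hz
      obtain ⟨i, hi⟩ := Set.mem_iUnion.1 hz
      have hi1 : gf z.1 = i := Set.mem_singleton_iff.1 (Set.mem_preimage.1 hi.1)
      have hi2 : (k - i) * N ≤ min z.2.1 z.2.2 := hi.2
      have e1 : i * N ≤ min z.1.1 z.1.2 := by
        rw [← hi1]
        exact Nat.div_mul_le_self _ _
      have e2 : min z.1.1 z.1.2 + min z.2.1 z.2.2 ≤ min w.1 w.2 :=
        le_min (le_trans (add_le_add (min_le_left _ _) (min_le_left _ _)) hzw.1)
          (le_trans (add_le_add (min_le_right _ _) (min_le_right _ _)) hzw.2)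
      have e3 : k * N ≤ i * N + (k - i) * N := by
        rw [← Nat.add_mul]
        exact Nat.mul_le_mul_right _ (by omega)
      show k * N ≤ min w.1 w.2
      calc k * N ≤ i * N + (k - i) * N := e3
        _ ≤ min z.1.1 z.1.2 + min z.2.1 z.2.2 := add_le_add e1 hi2
        _ ≤ min w.1 w.2 := e2
    have happ := hdom.apply_le (sA := sA) (sB := {w : ℕ × ℕ | k * N ≤ min w.1 w.2}) himp
    have hsum : ((chain p q T (N, N)).prod (chain p q T (x - N, y - N))) sA
        = ∑' i : ℕ, chain p q T (N, N) (gf ⁻¹' {i})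
            * chain p q T (x - N, y - N) {w : ℕ × ℕ | (k - i) * N ≤ min w.1 w.2} := by
      haveI := isProb_chain hp0 hp1 hq0 hq1 T (x - N, y - N)
      have hdisj : Pairwise (Function.onFun Disjoint
          (fun i : ℕ => (gf ⁻¹' {i}) ×ˢ {w : ℕ × ℕ | (k - i) * N ≤ min w.1 w.2})) := by
        intro i j hij
        refine Set.disjoint_left.2 fun z hz hz' => ?_
        exact hij ((Set.mem_singleton_iff.1 (Set.mem_preimage.1 hz.1)).symm.trans
          (Set.mem_singleton_iff.1 (Set.mem_preimage.1 hz'.1)))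
      rw [hsA, measure_iUnion hdisj (fun i => mAll _)]
      exact tsum_congr fun i => Measure.prod_prod _ _
    have hγi : ∀ i : ℕ, γ {i} = chain p q T (N, N) (gf ⁻¹' {i}) := by
      intro i
      rw [hγc, Measure.map_apply (mFun _) (mAll _)]
    show _root_.mconv (convPow γ a) γ {j | k ≤ j} ≤ _
    rw [mconv_upper]
    calc ∑' i : ℕ, convPow γ a {j | k ≤ j + i} * γ {i}
        ≤ ∑' i : ℕ, chain p q T (N, N) (gf ⁻¹' {i})
            * chain p q T (x - N, y - N) {w : ℕ × ℕ | (k - i) * N ≤ min w.1 w.2} := by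
          refine ENNReal.tsum_le_tsum fun i => ?_
          rw [hγi i, mul_comm]
          refine mul_le_mul_right ?_ _
          have hset : {j | k ≤ j + i} = {j | k - i ≤ j} := by
            ext j
            simp only [Set.mem_setOf_eq]
            omega
          rw [hset]
          exact ih (x - N) (y - N) (Nat.le_sub_of_add_le hxs) (Nat.le_sub_of_add_le hys) (k - i)
      _ = ((chain p q T (N, N)).prod (chain p q T (x - N, y - N))) sA := hsum.symm
      _ ≤ chain p q T (x, y) {w : ℕ × ℕ | k * N ≤ min w.1 w.2} := happ

end Main

end CoopProof

/-- `P^{(x,y)}(Z T ≥ k N) ≥ γ^{*a}([k, ∞))`, where `a = min(⌊x/N⌋, ⌊y/N⌋)` and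
`γ` is the law of `⌊Z T / N⌋` under `P^{(N,N)}`. -/
theorem coop_many_big_steps {Ω Ω' : Type*} [MeasurableSpace Ω] [MeasurableSpace Ω']
    (P : Measure Ω) (P' : Measure Ω') [IsProbabilityMeasure P] [IsProbabilityMeasure P']
    (p q : ℝ) (hp0 : 0 ≤ p) (hp1 : p ≤ 1) (hq0 : 0 ≤ q) (hq1 : q ≤ 1)
    (x y k N T : ℕ) (hN : 1 ≤ N) (hT : 1 ≤ T)
    (XY : ℕ → Ω → ℕ × ℕ) (XY' : ℕ → Ω' → ℕ × ℕ)
    (hXY : IsCoop P XY p q x y) (hXY' : IsCoop P' XY' p q N N)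
    (hmeas : ∀ n, Measurable (XY' n))
    (γ : Measure ℕ)
    (hγ : γ = Measure.map (fun ω => min (XY' T ω).1 (XY' T ω).2 / N) P') :
    convPow γ (min (x / N) (y / N)) {j | k ≤ j} ≤
      P {ω | k * N ≤ min (XY T ω).1 (XY T ω).2} := by
  classical
  have hchain' := CoopProof.map_eq_chain P' hp0 hp1 hq0 hq1 XY' hXY' hmeas T
  have hγc : γ = (CoopProof.chain p q T (N, N)).map (fun w : ℕ × ℕ => min w.1 w.2 / N) := by
    rw [hγ]
    have hcomp : (fun ω => min (XY' T ω).1 (XY' T ω).2 / N)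
        = (fun w : ℕ × ℕ => min w.1 w.2 / N) ∘ (XY' T) := rfl
    rw [hcomp, ← Measure.map_map (CoopProof.mFun fun w : ℕ × ℕ => min w.1 w.2 / N) (hmeas T),
      hchain']
  have hax : min (x / N) (y / N) * N ≤ x := by
    calc min (x / N) (y / N) * N ≤ (x / N) * N := Nat.mul_le_mul_right N (min_le_left _ _)
      _ ≤ x := Nat.div_mul_le_self x N
  have hay : min (x / N) (y / N) * N ≤ y := by
    calc min (x / N) (y / N) * N ≤ (y / N) * N := Nat.mul_le_mul_right N (min_le_right _ _)
      _ ≤ y := Nat.div_mul_le_self y N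
  have h1 := CoopProof.claim hp0 hp1 hq0 hq1 N T γ hγc (min (x / N) (y / N)) x y hax hay k
  have h2 := CoopProof.P_ge_chain P hp0 hp1 hq0 hq1 XY hXY T
    {w : ℕ × ℕ | k * N ≤ min w.1 w.2}
  exact le_trans h1 h2
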